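/- Let κ be a nonzero complex number, and set c = 1 − 3(κ−4)²/(2κ) and h = (6−κ)/(2κ). Let V be a representation of the Virasoro algebra on which the central element C acts as c·Id, and let v ∈ V satisfy L_n v = 0 for all n ≥ 1 and L_0 v = h v. Then the vector w = (−2 L_{−2} + (κ/2) L_{−1}²) v satisfies L_n w = 0 for all n ≥ 1 and L_0 w = (h + 2) w. (In other words, w is a singular vector of conformal weight h + 2, so that in the Verma module M(c, h) the image of w generates a proper submodule.) -/
import Mathlib


/-!
STATEMENT 2: Let `κ ≠ 0`, `c = 1 − 3(κ−4)²/(2κ)` and `h = (6−κ)/(2κ)`.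
Let `V` be a representation of the Virasoro algebra on which the central
element `C` acts as `c·Id`; concretely, a family of operators `L n` on `V`
satisfying `⁅L m, L n⁆ = (m − n) L (m+n) + ((m³−m)/12) δ_{m+n,0} c · Id`.
If `v ∈ V` satisfies `L n v = 0` for all `n ≥ 1` and `L 0 v = h v`, then
`w = (−2 L₋₂ + (κ/2) L₋₁²) v` satisfies `L n w = 0` for all `n ≥ 1` and
`L 0 w = (h + 2) w`.
-/

theorem virasoro_singular_vector
    (κ : ℂ) (hκ : κ ≠ 0)
    (c : ℂ) (hc : c = 1 - 3 * (κ - 4) ^ 2 / (2 * κ))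
    (h : ℂ) (hh : h = (6 - κ) / (2 * κ))
    (V : Type*) [AddCommGroup V] [Module ℂ V]
    (L : ℤ → Module.End ℂ V)
    (hVir : ∀ m n : ℤ, ⁅L m, L n⁆ =
      ((m : ℂ) - (n : ℂ)) • L (m + n) +
        (if m + n = 0 then (((m : ℂ) ^ 3 - (m : ℂ)) / 12) * c else 0) • (1 : Module.End ℂ V))
    (v : V) (hv_ann : ∀ n : ℤ, 1 ≤ n → L n v = 0) (hv_wt : L 0 v = h • v)
    (w : V) (hw : w = (-2 : ℂ) • L (-2) v + (κ / 2) • L (-1) (L (-1) v)) :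
    (∀ n : ℤ, 1 ≤ n → L n w = 0) ∧ L 0 w = (h + 2) • w := by
  have key : ∀ (m n : ℤ) (x : V), L m (L n x) = L n (L m x)
      + (((m:ℂ) - (n:ℂ))) • L (m + n) x
      + (if m + n = 0 then (((m : ℂ) ^ 3 - (m : ℂ)) / 12) * c else 0) • x := by
    intro m n x
    have h1 := congrFun (congrArg DFunLike.coe (hVir m n)) x
    simp only [Ring.lie_def, LinearMap.sub_apply, Module.End.mul_apply,
      LinearMap.add_apply, LinearMap.smul_apply, Module.End.one_apply] at h1
    rw [sub_eq_iff_eq_add] at h1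
    rw [h1]; abel
  -- basic facts
  have e1m1 : L 1 (L (-1) v) = (2*h) • v := by
    have := key 1 (-1) v
    norm_num [hv_ann 1 le_rfl, hv_wt, two_smul, smul_smul] at this
    rw [this]; try module
  have e0m1 : L 0 (L (-1) v) = (h+1) • L (-1) v := by
    have := key 0 (-1) v
    norm_num [hv_wt] at this
    rw [this]; module
  have e2m1 : L 2 (L (-1) v) = 0 := by
    have := key 2 (-1) v
    norm_num [hv_ann 2 (by norm_num), hv_ann 1 le_rfl] at this
    exact this
  -- n = 1 applied to w pieces
  have a1 : L 1 (L (-2) v) = (3:ℂ) • L (-1) v := by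
    have := key 1 (-2) v
    norm_num [hv_ann 1 le_rfl] at this
    exact this
  have b1 : L 1 (L (-1) (L (-1) v)) = (4*h+2) • L (-1) v := by
    have := key 1 (-1) (L (-1) v)
    norm_num [e1m1, e0m1, map_smul, two_smul] at this
    rw [this]; module
  -- n = 2
  have a2 : L 2 (L (-2) v) = (4*h + c/2) • v := by
    have := key 2 (-2) v
    norm_num [hv_ann 2 (by norm_num), hv_wt] at this
    rw [this]; match_scalars <;> ring
  have b2 : L 2 (L (-1) (L (-1) v)) = (6*h) • v := by
    have := key 2 (-1) (L (-1) v)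
    norm_num [e2m1, e1m1, map_smul] at this
    rw [this]; match_scalars <;> ring
  -- L 0
  have a0 : L 0 (L (-2) v) = (h+2) • L (-2) v := by
    have := key 0 (-2) v
    norm_num [hv_wt, map_smul] at this
    rw [this]; module
  have b0 : L 0 (L (-1) (L (-1) v)) = (h+2) • L (-1) (L (-1) v) := by
    have := key 0 (-1) (L (-1) v)
    norm_num [e0m1, map_smul] at this
    rw [this]; module
  constructor
  · intro n hn
    have hcase : n = 1 ∨ n = 2 ∨ 3 ≤ n := by omega
    subst hw
    rcases hcase with rfl | rfl | h3
    · rw [map_add, map_smul, map_smul, a1, b1]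
      rw [hh]
      match_scalars
      field_simp
      ring
    · rw [map_add, map_smul, map_smul, a2, b2]
      rw [hh, hc]
      match_scalars
      field_simp
      ring
    · -- n ≥ 3 : everything annihilates
      have han : ∀ k : ℤ, 1 ≤ k → k < n → L n (L (-k) v) = 0 := by
        intro k hk hkn
        have := key n (-k) v
        rw [hv_ann n (by omega), map_zero, if_neg (by omega)] at this
        have e : n + -k = n - k := by ring
        rw [e, hv_ann (n - k) (by omega)] at this
        simpa using this
      have an : L n (L (-2) v) = 0 := han 2 (by norm_num) (by omega)
      have an1 : L n (L (-1) v) = 0 := han 1 le_rfl (by omega)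
      have bn : L n (L (-1) (L (-1) v)) = 0 := by
        have := key n (-1) (L (-1) v)
        rw [an1, map_zero, if_neg (by omega)] at this
        have e : n + -1 = n - 1 := by ring
        rw [e] at this
        have hn1 : L (n - 1) (L (-1) v) = 0 := by
          have h2 := key (n-1) (-1) v
          rw [hv_ann (n-1) (by omega), map_zero, if_neg (by omega)] at h2
          have e2 : n - 1 + -1 = n - 2 := by ring
          rw [e2, hv_ann (n-2) (by omega)] at h2
          simpa using h2
        rw [this, hn1]
        simp
      rw [map_add, map_smul, map_smul, an, bn, smul_zero, smul_zero, add_zero]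
  · subst hw
    rw [map_add, map_smul, map_smul, a0, b0]
    module
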